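/- For a nearest-neighbour random walk on ℤ in a fixed environment ω, transient to +∞, the expected hitting time of a+1 starting from a satisfies E_{a,ω}[τ(a+1)] = 1 + 2 Σ_{i<a} e^{V(a)-V(i)}, provided this sum is finite. -/

import Mathlib

open Finset

/-- Quenched expected hitting time of `a+1` from `a` for a transient-to-`+∞`
birth-death chain on ℤ. The function `u y = E_{y,ω}[τ(y+1)]` is characterized as the
minimal nonnegative solution of the one-step recursion
`u y = 1 + (1 - ω y) * (u (y-1) + u y)`. -/
theorem quenched_expected_hitting_time
    (ω : ℤ → ℝ) (hω : ∀ y, 0 < ω y ∧ ω y < 1)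
    (V : ℤ → ℝ) (hV0 : V 0 = 0)
    (hV : ∀ x : ℤ, V x - V (x - 1) = Real.log ((1 - ω x) / ω x))
    (u : ℤ → ℝ) (hu0 : ∀ y, 0 ≤ u y)
    (hrec : ∀ y : ℤ, u y = 1 + (1 - ω y) * (u (y - 1) + u y))
    (hmin : ∀ w : ℤ → ℝ, (∀ y, 0 ≤ w y) →
      (∀ y : ℤ, w y = 1 + (1 - ω y) * (w (y - 1) + w y)) → ∀ y, u y ≤ w y)
    (a : ℤ)
    (hsum : Summable (fun i : {i : ℤ // i < a} => Real.exp (V a - V i))) :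
    u a = 1 + 2 * ∑' i : {i : ℤ // i < a}, Real.exp (V a - V i) := by
  have hωpos : ∀ y, 0 < ω y := fun y => (hω y).1
  have hωne : ∀ y, ω y ≠ 0 := fun y => ne_of_gt (hωpos y)
  set ρ : ℤ → ℝ := fun y => (1 - ω y) / ω y with hρdef
  have hρ_eq : ∀ z, ρ z = (1 - ω z) / ω z := fun z => rfl
  have hρpos : ∀ y, 0 < ρ y := fun y => div_pos (by linarith [(hω y).2]) (hωpos y)
  have hexp : ∀ x, Real.exp (V x - V (x - 1)) = ρ x := fun x => by
    rw [hV x, Real.exp_log (hρpos x)]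
  -- equivalence ℕ ≃ {i // i < a}
  let e : ℕ ≃ {i : ℤ // i < a} :=
    ⟨fun n => ⟨a - 1 - n, by omega⟩, fun i => (a - 1 - i.1).toNat,
     fun n => by show (a - 1 - (a - 1 - (n : ℤ))).toNat = n; omega,
     fun i => Subtype.ext (by show a - 1 - ((a - 1 - i.1).toNat : ℤ) = i.1; have := i.2; omega)⟩
  have hbase : Summable (fun n : ℕ => Real.exp (V a - V (a - 1 - n))) := by
    have := (e.summable_iff (f := fun i : {i : ℤ // i < a} => Real.exp (V a - V i))).mpr hsum
    exact this
  have hg : Summable (fun n : ℕ => Real.exp (-V (a - 1 - n))) := by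
    have h1 := hbase.mul_left (Real.exp (V a))⁻¹
    refine h1.congr fun n => ?_
    rw [Real.exp_sub, Real.exp_neg]
    field_simp
  have hg_all : ∀ y : ℤ, Summable (fun n : ℕ => Real.exp (-V (y - 1 - n))) := by
    intro y
    rcases le_or_gt y a with h | h
    · have := (summable_nat_add_iff (f := fun n : ℕ => Real.exp (-V (a - 1 - n)))
        ((a - y).toNat)).mpr hg
      refine this.congr fun n => ?_
      have harg : a - 1 - ((n + (a - y).toNat : ℕ) : ℤ) = y - 1 - n := by push_cast; omega
      rw [harg]
    · refine (summable_nat_add_iff (f := fun n : ℕ => Real.exp (-V (y - 1 - n)))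
        ((y - a).toNat)).mp ?_
      refine hg.congr fun n => ?_
      have harg : a - 1 - (n : ℤ) = y - 1 - ((n + (y - a).toNat : ℕ) : ℤ) := by push_cast; omega
      rw [harg]
  have hS : ∀ y : ℤ, Summable (fun n : ℕ => Real.exp (V y - V (y - 1 - n))) := by
    intro y
    refine ((hg_all y).mul_left (Real.exp (V y))).congr fun n => ?_
    rw [← Real.exp_add, ← sub_eq_add_neg]
  set T : ℤ → ℝ := fun y => ∑' n : ℕ, Real.exp (V y - V (y - 1 - n)) with hTdef
  have hT0 : ∀ y, 0 ≤ T y := fun y => tsum_nonneg fun n => (Real.exp_pos _).le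
  have hωρ : ∀ z : ℤ, ω z * ρ z = 1 - ω z := by
    intro z
    have hz : ω z ≠ 0 := hωne z
    rw [hρ_eq z]
    field_simp
  have hTrec : ∀ y : ℤ, T y = ρ y * (1 + T (y - 1)) := by
    intro y
    have h0 := Summable.tsum_eq_zero_add (hS y)
    have h1 : ∀ n : ℕ, Real.exp (V y - V (y - 1 - ((n : ℕ) + 1 : ℕ)))
        = ρ y * Real.exp (V (y - 1) - V (y - 1 - 1 - n)) := by
      intro n
      rw [← hexp y, ← Real.exp_add]
      congr 1
      have : (y - 1 - (((n : ℕ) + 1 : ℕ) : ℤ)) = y - 1 - 1 - n := by push_cast; ring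
      rw [this]; ring
    have h2 : (∑' n : ℕ, Real.exp (V y - V (y - 1 - ((n : ℕ) + 1 : ℕ))))
        = ρ y * T (y - 1) := by
      rw [show (ρ y * T (y - 1)) = ∑' n : ℕ, ρ y * Real.exp (V (y-1) - V (y - 1 - 1 - n)) from
        (tsum_mul_left).symm]
      exact tsum_congr h1
    have h3 : Real.exp (V y - V (y - 1 - ((0 : ℕ) : ℤ))) = ρ y := by
      rw [show ((0:ℕ):ℤ) = 0 from rfl, sub_zero, hexp y]
    calc T y = Real.exp (V y - V (y - 1 - ((0:ℕ):ℤ)))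
          + ∑' n : ℕ, Real.exp (V y - V (y - 1 - ((n : ℕ) + 1 : ℕ))) := h0
      _ = ρ y + ρ y * T (y - 1) := by rw [h3, h2]
      _ = ρ y * (1 + T (y - 1)) := by ring
  -- the candidate minimal solution
  have hw := hmin (fun y => 1 + 2 * T y)
    (fun y => by have := hT0 y; linarith)
    (fun y => by
      show 1 + 2 * T y = 1 + (1 - ω y) * ((1 + 2 * T (y - 1)) + (1 + 2 * T y))
      rw [hTrec y]
      linear_combination (2 + 2 * T (y - 1)) * hωρ y)
  have hupper : u a ≤ 1 + 2 * T a := hw a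
  -- one-step recursion in solved form
  have hstep : ∀ z : ℤ, u z = (1 + ρ z) + ρ z * u (z - 1) := by
    intro z
    have h2 : ω z * u z = 1 + (1 - ω z) * u (z - 1) := by linear_combination hrec z
    have hz : ω z ≠ 0 := hωne z
    rw [hρ_eq z]
    field_simp
    linear_combination h2
  -- partial sums identity
  have key : ∀ n : ℕ, u a = (∑ k ∈ range n,
      (Real.exp (V a - V (a - k)) + Real.exp (V a - V (a - k - 1))))
      + Real.exp (V a - V (a - n)) * u (a - n) := by
    intro n
    induction n with
    | zero => simp
    | succ n ih =>
      rw [sum_range_succ]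
      rw [show (a - ((n + 1 : ℕ) : ℤ)) = a - n - 1 from by push_cast; ring]
      have hE : Real.exp (V a - V (a - n)) * ρ (a - n) = Real.exp (V a - V (a - n - 1)) := by
        rw [← hexp (a - n), ← Real.exp_add]
        congr 1
        ring
      rw [ih, hstep (a - n)]
      linear_combination (1 + u (a - (n : ℤ) - 1)) * hE
  have partial_le : ∀ n : ℕ, (∑ k ∈ range n,
      (Real.exp (V a - V (a - k)) + Real.exp (V a - V (a - k - 1)))) ≤ u a := by
    intro n
    have h := key n
    have h2 : 0 ≤ Real.exp (V a - V (a - n)) * u (a - n) :=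
      mul_nonneg (Real.exp_pos _).le (hu0 _)
    linarith
  -- summability of the series of partial sums
  have c1 : Summable (fun k : ℕ => Real.exp (V a - V (a - k))) := by
    refine (summable_nat_add_iff 1).mp ?_
    refine (hS a).congr fun n => ?_
    have : a - 1 - (n : ℤ) = a - ((n + 1 : ℕ) : ℤ) := by push_cast; ring
    rw [this]
  have c2 : Summable (fun k : ℕ => Real.exp (V a - V (a - k - 1))) := by
    refine (hS a).congr fun n => ?_
    have : a - 1 - (n : ℤ) = a - (n : ℤ) - 1 := by ring
    rw [this]
  have tA : (∑' k : ℕ, Real.exp (V a - V (a - k))) = 1 + T a := by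
    rw [Summable.tsum_eq_zero_add c1]
    have h0 : Real.exp (V a - V (a - ((0:ℕ):ℤ))) = 1 := by norm_num
    rw [h0]
    congr 1
    refine tsum_congr fun n => ?_
    have : a - ((n + 1 : ℕ) : ℤ) = a - 1 - n := by push_cast; ring
    rw [this]
  have tB : (∑' k : ℕ, Real.exp (V a - V (a - k - 1))) = T a := by
    refine tsum_congr fun n => ?_
    have : a - (n : ℤ) - 1 = a - 1 - n := by ring
    rw [this]
  have hlower : 1 + 2 * T a ≤ u a := by
    have ht := Summable.tsum_le_of_sum_range_le (c1.add c2) partial_le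
    rw [Summable.tsum_add c1 c2, tA, tB] at ht
    linarith
  -- identify T a with the subtype tsum
  have hfin : (∑' i : {i : ℤ // i < a}, Real.exp (V a - V i)) = T a := by
    rw [← Equiv.tsum_eq e (fun i : {i : ℤ // i < a} => Real.exp (V a - V i))]
    rfl
  rw [hfin]
  linarith
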